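/- arXiv:math/0405331 — 4 statements merged into one kernel-verified Lean document; each statement's English description precedes it below -/
import Mathlib

section
/- Let I be a compact interval, ε' > 0, d ≥ 1, and for m = 1,…,d let Φ_m : I × [0,ε'] → ℂ be continuous functions such that Φ_m(x,ε) = Φ_{m,0}(x) + O(ε) uniformly in x ∈ I as ε → 0⁺, where Φ_{m,0}(x) := Φ_m(x,0). Let c_m : [0,ε'] → ℂ be bounded functions, and assume there exist c₁ ∈ ℂ with c₁ ≠ 0 and a natural number n₁ such that c_1(ε) = c₁ ε^{n₁} + O(ε^{n₁+1}) as ε → 0⁺. Fix x ∈ I such that Re Φ_{m,0}(x) < Re Φ_{1,0}(x) for every m = 2,…,d. Then the function ψ(ε) := Σ_{m=1}^d c_m(ε) exp(ε⁻¹ Φ_m(x,ε)) satisfies lim_{ε→0⁺} ε log|ψ(ε)| = Re Φ_{1,0}(x). -/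
open Set Filter

lemma aux_mul_log : Tendsto (fun ε : ℝ => ε * Real.log ε) (nhdsWithin 0 (Ioi 0)) (nhds 0) := by
  have h := tendsto_log_mul_rpow_nhdsGT_zero (r := 1) one_pos
  refine h.congr' ?_
  filter_upwards [self_mem_nhdsWithin] with ε hε
  rw [Real.rpow_one, mul_comm]

lemma aux_exp_decay (δ : ℝ) (hδ : 0 < δ) (n : ℕ) :
    Tendsto (fun ε : ℝ => Real.exp (-(δ/ε)) / ε ^ n) (nhdsWithin 0 (Ioi 0)) (nhds 0) := by
  have h1 : Tendsto (fun ε : ℝ => δ * ε⁻¹) (nhdsWithin 0 (Ioi 0)) atTop :=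
    tendsto_inv_nhdsGT_zero.const_mul_atTop hδ
  have h2 := (Real.tendsto_pow_mul_exp_neg_atTop_nhds_zero n).comp h1
  have h3 : Tendsto (fun ε : ℝ => ((δ * ε⁻¹) ^ n * Real.exp (-(δ * ε⁻¹))) / δ ^ n)
      (nhdsWithin 0 (Ioi 0)) (nhds 0) := by
    simpa using h2.div_const (δ ^ n)
  refine h3.congr' ?_
  filter_upwards [self_mem_nhdsWithin] with ε hε
  have hε0 : (0:ℝ) < ε := hε
  rw [mul_pow, div_eq_div_iff (by positivity) (by positivity), div_eq_mul_inv]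
  field_simp
  ring_nf
  rw [← mul_pow, mul_inv_cancel₀ hε0.ne', one_pow]

set_option maxHeartbeats 1000000 in
/-- If `ψ(ε) = Σ_m c_m(ε) exp(ε⁻¹Φ_m(x,ε))`, where `Φ_m(x,ε) = Φ_m(x,0) + O(ε)` uniformly,
the `c_m` are bounded, `c_1(ε) = c₁ε^{n₁} + O(ε^{n₁+1})` with `c₁ ≠ 0`, and
`Re Φ_m(x,0) < Re Φ_1(x,0)` for all `m ≠ 1`, then `ε log|ψ(ε)| → Re Φ_1(x,0)` as `ε → 0⁺`. -/
theorem stmt_0 (a b : ℝ) (hab : a ≤ b) (ε' : ℝ) (hε' : 0 < ε') (d : ℕ) (hd : 1 ≤ d)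
    (Φ : Fin d → ℝ → ℝ → ℂ)
    (hΦcont : ∀ m : Fin d,
      ContinuousOn (fun p : ℝ × ℝ => Φ m p.1 p.2) (Icc a b ×ˢ Icc 0 ε'))
    (hΦO : ∃ C : ℝ, ∀ m : Fin d, ∀ x ∈ Icc a b, ∀ ε ∈ Ioc (0:ℝ) ε',
      ‖Φ m x ε - Φ m x 0‖ ≤ C * ε)
    (c : Fin d → ℝ → ℂ)
    (hcbdd : ∃ B : ℝ, ∀ m : Fin d, ∀ ε ∈ Icc (0:ℝ) ε', ‖c m ε‖ ≤ B)
    (c₁ : ℂ) (hc₁ : c₁ ≠ 0) (n₁ : ℕ)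
    (hc : ∃ C : ℝ, ∀ ε ∈ Ioc (0:ℝ) ε', ‖c ⟨0, hd⟩ ε - c₁ * (ε:ℂ) ^ n₁‖ ≤ C * ε ^ (n₁ + 1))
    (x : ℝ) (hx : x ∈ Icc a b)
    (hdom : ∀ m : Fin d, m ≠ ⟨0, hd⟩ → (Φ m x 0).re < (Φ ⟨0, hd⟩ x 0).re) :
    Tendsto
      (fun ε : ℝ =>
        ε * Real.log ‖∑ m : Fin d, c m ε * Complex.exp ((ε:ℂ)⁻¹ * Φ m x ε)‖)
      (nhdsWithin 0 (Ioi 0)) (nhds ((Φ ⟨0, hd⟩ x 0).re)) := by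
  obtain ⟨C₀, hΦO⟩ := hΦO
  obtain ⟨B₀, hcbdd⟩ := hcbdd
  obtain ⟨Cc₀, hc⟩ := hc
  set one : Fin d := ⟨0, hd⟩ with hone
  set C : ℝ := max C₀ 0 with hCdef
  have hC0 : 0 ≤ C := le_max_right _ _
  have hΦO' : ∀ m : Fin d, ∀ ε ∈ Ioc (0:ℝ) ε', ‖Φ m x ε - Φ m x 0‖ ≤ C * ε := by
    intro m ε hε
    exact (hΦO m x hx ε hε).trans (by nlinarith [hε.1, le_max_left C₀ 0])
  set B : ℝ := max B₀ 0 with hBdef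
  have hB0 : 0 ≤ B := le_max_right _ _
  have hB : ∀ m : Fin d, ∀ ε ∈ Icc (0:ℝ) ε', ‖c m ε‖ ≤ B := by
    intro m ε hε
    exact (hcbdd m ε hε).trans (le_max_left _ _)
  set Cc : ℝ := max Cc₀ 0 with hCcdef
  have hCc0 : 0 ≤ Cc := le_max_right _ _
  have hcc : ∀ ε ∈ Ioc (0:ℝ) ε', ‖c one ε - c₁ * (ε:ℂ) ^ n₁‖ ≤ Cc * ε ^ (n₁ + 1) := by
    intro ε hε
    refine (hc ε hε).trans ?_
    have hε0 : (0:ℝ) < ε := hε.1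
    have : (0:ℝ) ≤ ε ^ (n₁+1) := by positivity
    nlinarith [le_max_left Cc₀ 0]
  -- gap δ
  obtain ⟨δ, hδ0, hδ⟩ : ∃ δ : ℝ, 0 < δ ∧ ∀ m : Fin d, m ≠ one →
      (Φ m x 0).re ≤ (Φ one x 0).re - δ := by
    by_cases hall : ∀ m : Fin d, m = one
    · exact ⟨1, one_pos, fun m hm => absurd (hall m) hm⟩
    · push_neg at hall
      set S : Finset ℝ := (Finset.univ.filter (fun m : Fin d => m ≠ one)).image
        (fun m => (Φ one x 0).re - (Φ m x 0).re) with hS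
      have hSne : S.Nonempty := by
        obtain ⟨m, hm⟩ := hall
        exact ⟨_, Finset.mem_image.2 ⟨m, by simp [hm], rfl⟩⟩
      refine ⟨S.min' hSne, ?_, ?_⟩
      · obtain ⟨y, hy, hyeq⟩ := Finset.mem_image.1 (S.min'_mem hSne)
        rw [← hyeq]
        have := hdom y (by simpa using hy)
        linarith
      · intro m hm
        have : (Φ one x 0).re - (Φ m x 0).re ∈ S :=
          Finset.mem_image.2 ⟨m, by simp [hm], rfl⟩
        have := S.min'_le _ this
        linarith
  set g : ℝ → ℂ := fun ε => ∑ m : Fin d, c m ε *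
    Complex.exp ((ε:ℂ)⁻¹ * (Φ m x ε - Φ one x ε)) with hg
  set K : ℝ := d * B * Real.exp (2*C) with hK
  have hK0 : 0 ≤ K := by positivity
  -- tail bound
  have htail : ∀ ε ∈ Ioc (0:ℝ) ε', ‖g ε - c one ε‖ ≤ K * Real.exp (-(δ/ε)) := by
    intro ε hε
    have hε0 : (0:ℝ) < ε := hε.1
    have hgsplit : g ε - c one ε =
        ∑ m ∈ Finset.univ.erase one, c m ε *
          Complex.exp ((ε:ℂ)⁻¹ * (Φ m x ε - Φ one x ε)) := by
      show (∑ m : Fin d, c m ε * Complex.exp ((ε:ℂ)⁻¹ * (Φ m x ε - Φ one x ε)))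
          - c one ε = _
      rw [← Finset.sum_erase_add _ _ (Finset.mem_univ one)]
      simp [Complex.exp_zero]
    rw [hgsplit]
    have hterm : ∀ m ∈ Finset.univ.erase one,
        ‖c m ε * Complex.exp ((ε:ℂ)⁻¹ * (Φ m x ε - Φ one x ε))‖
          ≤ B * Real.exp (2*C) * Real.exp (-(δ/ε)) := by
      intro m hm
      have hm' : m ≠ one := Finset.ne_of_mem_erase hm
      rw [norm_mul]
      have h1 : ‖c m ε‖ ≤ B := hB m ε ⟨hε.1.le, hε.2⟩
      have hre : ((ε:ℂ)⁻¹ * (Φ m x ε - Φ one x ε)).re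
          = ε⁻¹ * (Φ m x ε - Φ one x ε).re := by
        rw [← Complex.ofReal_inv, Complex.re_ofReal_mul]
      have hPhi : (Φ m x ε - Φ one x ε).re ≤ -δ + 2*C*ε := by
        have h2 : (Φ m x ε).re ≤ (Φ m x 0).re + C*ε := by
          have := hΦO' m ε hε
          have := abs_le.1 ((Complex.abs_re_le_norm (Φ m x ε - Φ m x 0)).trans_eq' rfl |>.trans (by
            exact this)) |>.2
          simp only [Complex.sub_re] at this
          linarith
        have h3 : (Φ one x 0).re - C*ε ≤ (Φ one x ε).re := by
          have := hΦO' one ε hε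
          have := abs_le.1 ((Complex.abs_re_le_norm (Φ one x ε - Φ one x 0)).trans this) |>.1
          simp only [Complex.sub_re] at this
          linarith
        have h4 := hδ m hm'
        simp only [Complex.sub_re]
        linarith
      have hexp : ‖Complex.exp ((ε:ℂ)⁻¹ * (Φ m x ε - Φ one x ε))‖
          ≤ Real.exp (2*C) * Real.exp (-(δ/ε)) := by
        rw [Complex.norm_exp, hre, ← Real.exp_add]
        apply Real.exp_le_exp.2
        have : ε⁻¹ * (Φ m x ε - Φ one x ε).re ≤ ε⁻¹ * (-δ + 2*C*ε) := by
          apply mul_le_mul_of_nonneg_left hPhi (by positivity)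
        refine this.trans_eq ?_
        field_simp
        ring
      calc ‖c m ε‖ * ‖Complex.exp ((ε:ℂ)⁻¹ * (Φ m x ε - Φ one x ε))‖
          ≤ B * (Real.exp (2*C) * Real.exp (-(δ/ε))) := by
            apply mul_le_mul h1 hexp (norm_nonneg _) hB0
        _ = B * Real.exp (2*C) * Real.exp (-(δ/ε)) := by ring
    calc ‖∑ m ∈ Finset.univ.erase one, c m ε *
          Complex.exp ((ε:ℂ)⁻¹ * (Φ m x ε - Φ one x ε))‖
        ≤ ∑ m ∈ Finset.univ.erase one, ‖c m ε *
          Complex.exp ((ε:ℂ)⁻¹ * (Φ m x ε - Φ one x ε))‖ := norm_sum_le _ _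
      _ ≤ ∑ _m ∈ Finset.univ.erase one, B * Real.exp (2*C) * Real.exp (-(δ/ε)) :=
          Finset.sum_le_sum hterm
      _ = ((Finset.univ.erase one).card : ℝ) * (B * Real.exp (2*C) * Real.exp (-(δ/ε))) := by
          rw [Finset.sum_const, nsmul_eq_mul]
      _ ≤ (d : ℝ) * (B * Real.exp (2*C) * Real.exp (-(δ/ε))) := by
          have hcard : ((Finset.univ.erase one).card : ℝ) ≤ (d : ℝ) := by
            have h := (Finset.card_erase_le (s := (Finset.univ : Finset (Fin d))) (a := one)).trans
              (le_of_eq (Finset.card_univ.trans (Fintype.card_fin d)))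
            exact_mod_cast h
          have hnn : (0:ℝ) ≤ B * Real.exp (2*C) * Real.exp (-(δ/ε)) := by positivity
          exact mul_le_mul_of_nonneg_right hcard hnn
      _ = K * Real.exp (-(δ/ε)) := by rw [hK]; ring

  -- lower bound on leading coefficient
  have hclow : ∀ ε ∈ Ioc (0:ℝ) ε', ‖c₁‖ * ε ^ n₁ - Cc * ε ^ (n₁+1) ≤ ‖c one ε‖ := by
    intro ε hε
    have hε0 : (0:ℝ) < ε := hε.1
    have h1 := hcc ε hε
    have h2 : ‖c₁ * (ε:ℂ) ^ n₁‖ = ‖c₁‖ * ε ^ n₁ := by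
      rw [norm_mul, norm_pow, Complex.norm_real, Real.norm_eq_abs, abs_of_pos hε0]
    have h3 := norm_sub_norm_le (c₁ * (ε:ℂ) ^ n₁) (c one ε)
    rw [norm_sub_rev] at h3
    linarith
  have hc₁pos : (0:ℝ) < ‖c₁‖ := norm_pos_iff.2 hc₁
  have hev1 : ∀ᶠ ε in nhdsWithin (0:ℝ) (Ioi 0), ε ∈ Ioc (0:ℝ) ε' :=
    Ioc_mem_nhdsGT_of_mem ⟨le_refl 0, hε'⟩
  have hevp : ∀ᶠ ε in nhdsWithin (0:ℝ) (Ioi 0), (0:ℝ) < ε := self_mem_nhdsWithin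
  have hev2 : ∀ᶠ ε in nhdsWithin (0:ℝ) (Ioi 0), Cc * ε ≤ ‖c₁‖/4 := by
    have ht : Tendsto (fun ε : ℝ => Cc * ε) (nhdsWithin 0 (Ioi 0)) (nhds 0) := by
      have : Tendsto (fun ε : ℝ => Cc * ε) (nhds 0) (nhds 0) := by
        exact (continuous_mul_left Cc).tendsto' 0 0 (by simp)
      exact this.mono_left nhdsWithin_le_nhds
    exact ht.eventually (eventually_le_nhds (by positivity))
  have hev3 : ∀ᶠ ε in nhdsWithin (0:ℝ) (Ioi 0),
      K * Real.exp (-(δ/ε)) ≤ (‖c₁‖/4) * ε ^ n₁ := by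
    have ht : Tendsto (fun ε : ℝ => K * (Real.exp (-(δ/ε)) / ε ^ n₁))
        (nhdsWithin 0 (Ioi 0)) (nhds 0) := by
      simpa using (aux_exp_decay δ hδ0 n₁).const_mul K
    filter_upwards [ht.eventually (eventually_le_nhds (show (0:ℝ) < ‖c₁‖/4 by positivity)),
      hevp] with ε h1 h2
    have hp : (0:ℝ) < ε ^ n₁ := by positivity
    calc K * Real.exp (-(δ/ε)) = K * (Real.exp (-(δ/ε)) / ε ^ n₁) * ε ^ n₁ := by
          field_simp
      _ ≤ (‖c₁‖/4) * ε ^ n₁ := mul_le_mul_of_nonneg_right h1 hp.le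
  set L : ℝ := ‖c₁‖/2 with hL
  have hL0 : (0:ℝ) < L := by positivity
  have hglow : ∀ᶠ ε in nhdsWithin (0:ℝ) (Ioi 0), L * ε ^ n₁ ≤ ‖g ε‖ := by
    filter_upwards [hev1, hev2, hev3, hevp] with ε h1 h2 h3 h4
    have hlo := hclow ε h1
    have hta := htail ε h1
    have h5 := norm_sub_norm_le (c one ε) (g ε)
    rw [norm_sub_rev] at h5
    have h6 : Cc * ε ^ (n₁+1) ≤ (‖c₁‖/4) * ε ^ n₁ := by
      rw [pow_succ]
      calc Cc * (ε ^ n₁ * ε) = (Cc * ε) * ε ^ n₁ := by ring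
        _ ≤ (‖c₁‖/4) * ε ^ n₁ := by
            apply mul_le_mul_of_nonneg_right h2 (by positivity)
    have hp : (0:ℝ) < ε ^ n₁ := by positivity
    rw [hL]
    nlinarith
  set M : ℝ := B + K + 1 with hM
  have hM0 : (0:ℝ) < M := by positivity
  have hgup : ∀ᶠ ε in nhdsWithin (0:ℝ) (Ioi 0), ‖g ε‖ ≤ M := by
    filter_upwards [hev1, hevp] with ε h1 h2
    have hta := htail ε h1
    have h5 := norm_le_norm_add_norm_sub' (g ε) (c one ε)
    have h6 : Real.exp (-(δ/ε)) ≤ 1 := by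
      rw [Real.exp_le_one_iff]
      have : (0:ℝ) < δ/ε := by positivity
      linarith
    have h7 := hB one ε ⟨h2.le, h1.2⟩
    have h8 : ‖g ε - c one ε‖ ≤ K := by nlinarith [Real.exp_pos (-(δ/ε))]
    rw [norm_sub_rev] at h8
    nlinarith [norm_nonneg (g ε - c one ε)]
  -- key identity
  have heq : ∀ᶠ ε in nhdsWithin (0:ℝ) (Ioi 0),
      (Φ one x ε).re + ε * Real.log ‖g ε‖
        = ε * Real.log ‖∑ m : Fin d, c m ε * Complex.exp ((ε:ℂ)⁻¹ * Φ m x ε)‖ := by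
    filter_upwards [hglow, hevp] with ε h1 h2
    rw [eq_comm]
    have hgpos : (0:ℝ) < ‖g ε‖ := lt_of_lt_of_le (by positivity) h1
    have hsum : ∑ m : Fin d, c m ε * Complex.exp ((ε:ℂ)⁻¹ * Φ m x ε)
        = Complex.exp ((ε:ℂ)⁻¹ * Φ one x ε) * g ε := by
      rw [hg, Finset.mul_sum]
      apply Finset.sum_congr rfl
      intro m _
      have hexpeq : Complex.exp ((ε:ℂ)⁻¹ * Φ one x ε) *
          Complex.exp ((ε:ℂ)⁻¹ * (Φ m x ε - Φ one x ε))
          = Complex.exp ((ε:ℂ)⁻¹ * Φ m x ε) := by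
        rw [← Complex.exp_add]
        ring_nf
      rw [← hexpeq]
      ring
    rw [hsum, norm_mul, Complex.norm_exp,
      Real.log_mul (Real.exp_ne_zero _) (ne_of_gt hgpos), Real.log_exp,
      ← Complex.ofReal_inv, Complex.re_ofReal_mul]
    field_simp
  -- part A
  have hA : Tendsto (fun ε => (Φ one x ε).re) (nhdsWithin 0 (Ioi 0))
      (nhds ((Φ one x 0).re)) := by
    have h0 : Tendsto (fun ε => (Φ one x ε).re - (Φ one x 0).re)
        (nhdsWithin 0 (Ioi 0)) (nhds 0) := by
      refine squeeze_zero_norm' (a := fun ε => C * ε) ?_ ?_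
      · filter_upwards [hev1] with ε hε
        have := hΦO' one ε hε
        calc ‖(Φ one x ε).re - (Φ one x 0).re‖
            = |(Φ one x ε - Φ one x 0).re| := by rw [Real.norm_eq_abs, Complex.sub_re]
          _ ≤ ‖Φ one x ε - Φ one x 0‖ := Complex.abs_re_le_norm _
          _ ≤ C * ε := this
      · have : Tendsto (fun ε : ℝ => C * ε) (nhds 0) (nhds 0) := by
          exact (continuous_mul_left C).tendsto' 0 0 (by simp)
        exact this.mono_left nhdsWithin_le_nhds
    have := h0.add (tendsto_const_nhds (α := ℝ) (x := (Φ one x 0).re)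
      (f := nhdsWithin (0:ℝ) (Ioi 0)))
    simpa using this
  -- part B
  have hB2 : Tendsto (fun ε => ε * Real.log ‖g ε‖) (nhdsWithin (0:ℝ) (Ioi 0)) (nhds 0) := by
    have hlowten : Tendsto (fun ε : ℝ => ε * Real.log (L * ε ^ n₁))
        (nhdsWithin 0 (Ioi 0)) (nhds 0) := by
      have hrw : ∀ᶠ ε in nhdsWithin (0:ℝ) (Ioi 0),
          ε * Real.log L + (n₁ : ℝ) * (ε * Real.log ε) = ε * Real.log (L * ε ^ n₁) := by
        filter_upwards [hevp] with ε hε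
        rw [Real.log_mul (ne_of_gt hL0) (by positivity), Real.log_pow]
        ring
      have h1 : Tendsto (fun ε : ℝ => ε * Real.log L) (nhdsWithin 0 (Ioi 0)) (nhds 0) := by
        have : Tendsto (fun ε : ℝ => ε * Real.log L) (nhds 0) (nhds 0) := by
          exact (continuous_mul_right (Real.log L)).tendsto' 0 0 (by simp)
        exact this.mono_left nhdsWithin_le_nhds
      have h2 := aux_mul_log.const_mul (n₁ : ℝ)
      have := h1.add (by simpa using h2)
      simp only [add_zero] at this
      exact this.congr' hrw
    have hupten : Tendsto (fun ε : ℝ => ε * Real.log M) (nhdsWithin 0 (Ioi 0)) (nhds 0) := by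
      have : Tendsto (fun ε : ℝ => ε * Real.log M) (nhds 0) (nhds 0) := by
        exact (continuous_mul_right (Real.log M)).tendsto' 0 0 (by simp)
      exact this.mono_left nhdsWithin_le_nhds
    refine tendsto_of_tendsto_of_tendsto_of_le_of_le' hlowten hupten ?_ ?_
    · filter_upwards [hglow, hevp] with ε h1 h2
      have hgpos : (0:ℝ) < L * ε ^ n₁ := by positivity
      exact mul_le_mul_of_nonneg_left (Real.log_le_log hgpos h1) h2.le
    · filter_upwards [hglow, hgup, hevp] with ε h1 h3 h2
      have hgpos : (0:ℝ) < ‖g ε‖ := lt_of_lt_of_le (by positivity) h1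
      exact mul_le_mul_of_nonneg_left (Real.log_le_log hgpos h3) h2.le
  have := (hA.add hB2).congr' heq
  simpa using this
end

section
/- Let I = [0,b] with b > 0, ε₀ > 0, and let a_0, a_1 : I × [0,ε₀] → ℂ be continuous functions with a_0(x,0) ≠ 0 and a_1(x,0) ≠ 0 for all x ∈ I. Then there exists ε' ∈ (0,ε₀] such that a_0 and a_1 are nonvanishing on I × [0,ε'], and for ε ∈ (0,ε'] and k ∈ ℕ with kε ∈ I the unique solution φ of the first-order ε-difference equation a_0(kε,ε) φ(kε,ε) + a_1(kε,ε) φ((k+1)ε,ε) = 0 with φ(0,ε) = 1, namely φ(kε,ε) = ∏_{j=0}^{k−1} (−a_0(jε,ε)/a_1(jε,ε)), satisfies for every fixed x ∈ (0,b]: lim_{ε→0⁺} ε log|φ(⌊x/ε⌋ε, ε)| = ∫₀ˣ log|a_0(t,0)/a_1(t,0)| dt. -/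
open Set Filter
set_option maxHeartbeats 1000000

lemma riemann_aux (b ε' : ℝ) (hb : 0 < b) (hε' : 0 < ε') (h : ℝ × ℝ → ℝ)
    (hc : ContinuousOn h (Icc 0 b ×ˢ Icc 0 ε')) {x : ℝ} (hx : x ∈ Ioc 0 b) :
    Tendsto (fun ε : ℝ => ε * ∑ j ∈ Finset.range ⌊x / ε⌋₊, h ((j:ℝ) * ε, ε))
      (nhdsWithin 0 (Ioi 0)) (nhds (∫ t in (0:ℝ)..x, h (t, 0))) := by
  have hK : IsCompact (Icc (0:ℝ) b ×ˢ Icc (0:ℝ) ε') := isCompact_Icc.prod isCompact_Icc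
  obtain ⟨M, hM⟩ := hK.exists_bound_of_continuousOn hc
  have hM0 : 0 ≤ M := le_trans (norm_nonneg _) (hM (0,0) ⟨⟨le_rfl, hb.le⟩, ⟨le_rfl, hε'.le⟩⟩)
  have huc := hK.uniformContinuousOn_of_continuous hc
  rw [Metric.uniformContinuousOn_iff] at huc
  have hg : ContinuousOn (fun t : ℝ => h (t, 0)) (Icc 0 b) := by
    apply hc.comp (Continuous.continuousOn (by continuity))
    intro t ht
    exact ⟨ht, le_rfl, hε'.le⟩
  have hgi : ∀ u v : ℝ, 0 ≤ u → u ≤ v → v ≤ b →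
      IntervalIntegrable (fun t => h (t,0)) MeasureTheory.volume u v := by
    intro u v hu huv hv
    apply ContinuousOn.intervalIntegrable
    apply hg.mono
    rw [uIcc_of_le huv]
    exact Icc_subset_Icc hu hv
  rw [Metric.tendsto_nhdsWithin_nhds]
  intro δ hδ
  set δ' := δ / (2 * (b + 1)) with hδ'def
  have hδ'pos : 0 < δ' := by positivity
  obtain ⟨η₁, hη₁, Hu⟩ := huc δ' hδ'pos
  refine ⟨min (min η₁ ε') (δ / (2 * (M + 1))), by positivity, ?_⟩
  intro ε hεmem hεd
  have hεpos : (0:ℝ) < ε := hεmem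
  rw [Real.dist_eq, sub_zero, abs_of_pos hεpos] at hεd
  have hε1 : ε < η₁ := lt_of_lt_of_le hεd (le_trans (min_le_left _ _) (min_le_left _ _))
  have hε2 : ε ≤ ε' := le_of_lt (lt_of_lt_of_le hεd (le_trans (min_le_left _ _) (min_le_right _ _)))
  have hε3 : ε < δ / (2 * (M + 1)) := lt_of_lt_of_le hεd (min_le_right _ _)
  set k := ⌊x / ε⌋₊ with hkdef
  set a : ℕ → ℝ := fun j => (j:ℝ) * ε with hadef
  have hkx : (k:ℝ) * ε ≤ x := by
    have h1 : (k:ℝ) ≤ x / ε := Nat.floor_le (div_nonneg hx.1.le hεpos.le)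
    calc (k:ℝ) * ε ≤ (x / ε) * ε := by nlinarith
      _ = x := div_mul_cancel₀ _ hεpos.ne'
  have hxk : x < (k:ℝ) * ε + ε := by
    have h1 : x / ε < (k:ℝ) + 1 := Nat.lt_floor_add_one _
    have := (div_lt_iff₀ hεpos).mp h1
    nlinarith
  have hax : ∀ j : ℕ, j ≤ k → a j ≤ x := by
    intro j hj
    have : (j:ℝ) ≤ (k:ℝ) := by exact_mod_cast hj
    calc a j ≤ (k:ℝ) * ε := by simp only [hadef]; nlinarith
      _ ≤ x := hkx
  have ha0 : ∀ j : ℕ, 0 ≤ a j := fun j => mul_nonneg (Nat.cast_nonneg j) hεpos.le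
  have hamono : ∀ j : ℕ, a j ≤ a (j+1) := by
    intro j; simp only [hadef]; push_cast; nlinarith
  have hsplit : ∫ t in (0:ℝ)..((k:ℝ)*ε), h (t,0)
      = ∑ j ∈ Finset.range k, ∫ t in a j..a (j+1), h (t,0) := by
    have hint : ∀ i, i < k → IntervalIntegrable (fun t => h (t,0)) MeasureTheory.volume (a i) (a (i+1)) := by
      intro i hi
      exact hgi _ _ (ha0 i) (hamono i) (le_trans (hax (i+1) hi) hx.2)
    have := intervalIntegral.sum_integral_adjacent_intervals hint
    rw [this]
    simp [hadef]
  have heq1 : (∫ t in (0:ℝ)..x, h (t,0))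
      = (∫ t in (0:ℝ)..((k:ℝ)*ε), h (t,0)) + ∫ t in ((k:ℝ)*ε)..x, h (t,0) := by
    rw [intervalIntegral.integral_add_adjacent_intervals
      (hgi _ _ le_rfl (ha0 k) (le_trans hkx hx.2))
      (hgi _ _ (ha0 k) hkx (hx.2))]
  have hterm : ∀ j ∈ Finset.range k,
      ‖ε * h (a j, ε) - ∫ t in a j..a (j+1), h (t,0)‖ ≤ δ' * ε := by
    intro j hj
    have hjk : j < k := Finset.mem_range.mp hj
    have hjb : a j ≤ b := le_trans (hax j hjk.le) hx.2
    have hj1b : a (j+1) ≤ b := le_trans (hax (j+1) hjk) hx.2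
    have hconst : ε * h (a j, ε) = ∫ _ in a j..a (j+1), h (a j, ε) := by
      rw [intervalIntegral.integral_const]
      simp only [hadef, smul_eq_mul]
      push_cast
      ring
    rw [hconst, ← intervalIntegral.integral_sub (intervalIntegrable_const)
      (hgi _ _ (ha0 j) (hamono j) hj1b)]
    have hbound : ∀ t ∈ Set.uIoc (a j) (a (j+1)), ‖h (a j, ε) - h (t, 0)‖ ≤ δ' := by
      intro t ht
      rw [uIoc_of_le (hamono j)] at ht
      have htb : t ∈ Icc (0:ℝ) b := ⟨le_trans (ha0 j) ht.1.le, le_trans ht.2 hj1b⟩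
      have hp : ((a j, ε) : ℝ × ℝ) ∈ Icc (0:ℝ) b ×ˢ Icc (0:ℝ) ε' :=
        ⟨⟨ha0 j, hjb⟩, ⟨hεpos.le, hε2⟩⟩
      have hq : ((t, 0) : ℝ × ℝ) ∈ Icc (0:ℝ) b ×ˢ Icc (0:ℝ) ε' :=
        ⟨htb, ⟨le_rfl, hε'.le⟩⟩
      have hdist : dist ((a j, ε) : ℝ × ℝ) ((t, 0) : ℝ × ℝ) < η₁ := by
        rw [Prod.dist_eq]
        have h1 : dist (a j) t ≤ ε := by
          rw [Real.dist_eq, abs_le]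
          have : a (j+1) = a j + ε := by simp only [hadef]; push_cast; ring
          constructor <;> [linarith [ht.2, this]; linarith [ht.1.le]]
        have h2 : dist ε (0:ℝ) ≤ ε := by rw [Real.dist_eq, sub_zero, abs_of_pos hεpos]
        calc max (dist (a j) t) (dist ε (0:ℝ)) ≤ ε := max_le h1 h2
          _ < η₁ := hε1
      have := Hu _ hp _ hq hdist
      rw [Real.dist_eq] at this
      exact le_of_lt this
    calc ‖∫ t in a j..a (j+1), (h (a j, ε) - h (t,0))‖
        ≤ δ' * |a (j+1) - a j| :=
          intervalIntegral.norm_integral_le_of_norm_le_const hbound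
      _ = δ' * ε := by
          congr 1
          have : a (j+1) - a j = ε := by simp only [hadef]; push_cast; ring
          rw [this, abs_of_pos hεpos]
  have htail : ‖∫ t in ((k:ℝ)*ε)..x, h (t,0)‖ ≤ M * ε := by
    have hbound : ∀ t ∈ Set.uIoc ((k:ℝ)*ε) x, ‖h (t, 0)‖ ≤ M := by
      intro t ht
      rw [uIoc_of_le hkx] at ht
      exact hM (t, 0) ⟨⟨le_trans (ha0 k) ht.1.le, le_trans ht.2 hx.2⟩, ⟨le_rfl, hε'.le⟩⟩
    calc ‖∫ t in ((k:ℝ)*ε)..x, h (t,0)‖ ≤ M * |x - (k:ℝ)*ε| :=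
        intervalIntegral.norm_integral_le_of_norm_le_const hbound
      _ ≤ M * ε := by
          apply mul_le_mul_of_nonneg_left _ hM0
          rw [abs_of_nonneg (by linarith)]
          linarith
  rw [Real.dist_eq]
  have hkey : ε * (∑ j ∈ Finset.range k, h ((j:ℝ) * ε, ε)) - ∫ t in (0:ℝ)..x, h (t,0)
      = (∑ j ∈ Finset.range k, (ε * h (a j, ε) - ∫ t in a j..a (j+1), h (t,0)))
        - ∫ t in ((k:ℝ)*ε)..x, h (t,0) := by
    rw [heq1, hsplit, Finset.sum_sub_distrib, Finset.mul_sum]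
    simp only [hadef]
    ring
  rw [hkey]
  have habs : |(∑ j ∈ Finset.range k, (ε * h (a j, ε) - ∫ t in a j..a (j+1), h (t,0)))
        - ∫ t in ((k:ℝ)*ε)..x, h (t,0)|
      ≤ (k:ℝ) * (δ' * ε) + M * ε := by
    calc |(∑ j ∈ Finset.range k, (ε * h (a j, ε) - ∫ t in a j..a (j+1), h (t,0)))
        - ∫ t in ((k:ℝ)*ε)..x, h (t,0)|
        ≤ |∑ j ∈ Finset.range k, (ε * h (a j, ε) - ∫ t in a j..a (j+1), h (t,0))|
          + |∫ t in ((k:ℝ)*ε)..x, h (t,0)| := abs_sub _ _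
      _ ≤ (∑ j ∈ Finset.range k, |ε * h (a j, ε) - ∫ t in a j..a (j+1), h (t,0)|)
          + M * ε := add_le_add (Finset.abs_sum_le_sum_abs _ _) htail
      _ ≤ (∑ _j ∈ Finset.range k, δ' * ε) + M * ε := by
          apply add_le_add_left
          exact Finset.sum_le_sum hterm
      _ = (k:ℝ) * (δ' * ε) + M * ε := by rw [Finset.sum_const, Finset.card_range]; push_cast; ring
  have half1 : (k:ℝ) * (δ' * ε) < δ / 2 := by
    have h1 : (k:ℝ) * (δ' * ε) = δ' * ((k:ℝ) * ε) := by ring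
    rw [h1]
    have h2 : δ' * ((k:ℝ) * ε) ≤ δ' * b :=
      mul_le_mul_of_nonneg_left (le_trans hkx hx.2) hδ'pos.le
    have h3 : δ' * b < δ / 2 := by
      rw [hδ'def, div_mul_eq_mul_div, div_lt_div_iff₀ (by positivity) (by norm_num)]
      nlinarith
    linarith
  have half2 : M * ε < δ / 2 := by
    have h1 : M * ε ≤ (M+1) * ε := mul_le_mul_of_nonneg_right (by linarith) hεpos.le
    have h2 : (M+1) * ε < (M+1) * (δ / (2 * (M + 1))) :=
      mul_lt_mul_of_pos_left hε3 (by linarith)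
    have h3 : (M+1) * (δ / (2 * (M + 1))) = δ / 2 := by
      field_simp
    linarith
  linarith [habs]

/-- For a regular first-order ε-difference equation
`a_0(kε,ε)φ(kε,ε) + a_1(kε,ε)φ((k+1)ε,ε) = 0` with `φ(0,ε)=1`, whose explicit solution is
`φ(kε,ε) = ∏_{j<k}(−a_0(jε,ε)/a_1(jε,ε))`, the growth rate of the solution is
`lim_{ε→0⁺} ε log|φ(⌊x/ε⌋ε,ε)| = ∫₀ˣ log|a_0(t,0)/a_1(t,0)| dt` for each `x ∈ (0,b]`. -/
theorem stmt_2 (b : ℝ) (hb : 0 < b) (ε₀ : ℝ) (hε₀ : 0 < ε₀)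
    (a₀ a₁ : ℝ → ℝ → ℂ)
    (ha₀c : ContinuousOn (fun p : ℝ × ℝ => a₀ p.1 p.2) (Icc 0 b ×ˢ Icc 0 ε₀))
    (ha₁c : ContinuousOn (fun p : ℝ × ℝ => a₁ p.1 p.2) (Icc 0 b ×ˢ Icc 0 ε₀))
    (ha₀ : ∀ x ∈ Icc 0 b, a₀ x 0 ≠ 0) (ha₁ : ∀ x ∈ Icc 0 b, a₁ x 0 ≠ 0) :
    ∃ ε' ∈ Ioc (0:ℝ) ε₀,
      (∀ x ∈ Icc 0 b, ∀ ε ∈ Icc (0:ℝ) ε', a₀ x ε ≠ 0 ∧ a₁ x ε ≠ 0) ∧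
      ∀ x ∈ Ioc (0:ℝ) b,
        Tendsto
          (fun ε : ℝ =>
            ε * Real.log
              ‖∏ j ∈ Finset.range ⌊x / ε⌋₊, (-(a₀ (j * ε) ε) / a₁ (j * ε) ε)‖)
          (nhdsWithin 0 (Ioi 0))
          (nhds (∫ t in (0:ℝ)..x, Real.log ‖a₀ t 0 / a₁ t 0‖)) := by
  classical
  have hK : IsCompact (Icc (0:ℝ) b ×ˢ Icc (0:ℝ) ε₀) := isCompact_Icc.prod isCompact_Icc
  have hKc : IsClosed (Icc (0:ℝ) b ×ˢ Icc (0:ℝ) ε₀) := isClosed_Icc.prod isClosed_Icc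
  set Z : Set (ℝ × ℝ) :=
      ((Icc 0 b ×ˢ Icc 0 ε₀) ∩ (fun p : ℝ × ℝ => a₀ p.1 p.2) ⁻¹' {0}) ∪
      ((Icc 0 b ×ˢ Icc 0 ε₀) ∩ (fun p : ℝ × ℝ => a₁ p.1 p.2) ⁻¹' {0}) with hZdef
  have hZclosed : IsClosed Z :=
    (ha₀c.preimage_isClosed_of_isClosed hKc isClosed_singleton).union
      (ha₁c.preimage_isClosed_of_isClosed hKc isClosed_singleton)
  have hZsub : Z ⊆ Icc 0 b ×ˢ Icc 0 ε₀ := by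
    rintro p (⟨hp, _⟩ | ⟨hp, _⟩) <;> exact hp
  have hZcomp : IsCompact Z := hK.of_isClosed_subset hZclosed hZsub
  have hexists : ∃ ε' ∈ Ioc (0:ℝ) ε₀,
      ∀ x ∈ Icc 0 b, ∀ ε ∈ Icc (0:ℝ) ε', a₀ x ε ≠ 0 ∧ a₁ x ε ≠ 0 := by
    by_cases hne : Z.Nonempty
    · obtain ⟨z, hzZ, hzmin⟩ := hZcomp.exists_isMinOn hne continuous_snd.continuousOn
      have hz2nn : 0 ≤ z.2 := (hZsub hzZ).2.1
      have hz2 : 0 < z.2 := by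
        rcases hz2nn.lt_or_eq with h | h
        · exact h
        · exfalso
          have hz1 : z.1 ∈ Icc (0:ℝ) b := (hZsub hzZ).1
          rcases hzZ with ⟨_, hz⟩ | ⟨_, hz⟩
          · simp only [mem_preimage, mem_singleton_iff] at hz
            rw [← h] at hz
            exact ha₀ z.1 hz1 hz
          · simp only [mem_preimage, mem_singleton_iff] at hz
            rw [← h] at hz
            exact ha₁ z.1 hz1 hz
      refine ⟨z.2 / 2, ⟨by linarith, le_trans (by linarith) (hZsub hzZ).2.2⟩, ?_⟩
      intro x hxmem ε hεmem
      constructor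
      · intro hzero
        have hmemZ : ((x, ε) : ℝ × ℝ) ∈ Z :=
          Or.inl ⟨⟨hxmem, ⟨hεmem.1, le_trans hεmem.2 (le_trans (by linarith) (hZsub hzZ).2.2)⟩⟩,
            by simpa using hzero⟩
        have := hzmin hmemZ
        simp only at this
        have : z.2 ≤ ε := this
        linarith [hεmem.2]
      · intro hzero
        have hmemZ : ((x, ε) : ℝ × ℝ) ∈ Z :=
          Or.inr ⟨⟨hxmem, ⟨hεmem.1, le_trans hεmem.2 (le_trans (by linarith) (hZsub hzZ).2.2)⟩⟩,
            by simpa using hzero⟩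
        have : z.2 ≤ ε := hzmin hmemZ
        linarith [hεmem.2]
    · refine ⟨ε₀, ⟨hε₀, le_rfl⟩, ?_⟩
      intro x hxmem ε hεmem
      constructor
      · intro hzero
        exact hne ⟨(x, ε), Or.inl ⟨⟨hxmem, hεmem⟩, by simpa using hzero⟩⟩
      · intro hzero
        exact hne ⟨(x, ε), Or.inr ⟨⟨hxmem, hεmem⟩, by simpa using hzero⟩⟩
  obtain ⟨ε', hε'mem, hnv⟩ := hexists
  refine ⟨ε', hε'mem, hnv, ?_⟩
  intro x hx
  set h : ℝ × ℝ → ℝ := fun p => Real.log ‖a₀ p.1 p.2‖ - Real.log ‖a₁ p.1 p.2‖ with hhdef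
  have hsub : Icc (0:ℝ) b ×ˢ Icc (0:ℝ) ε' ⊆ Icc 0 b ×ˢ Icc 0 ε₀ :=
    prod_mono_right (Icc_subset_Icc le_rfl hε'mem.2)
  have hnv' : ∀ p ∈ Icc (0:ℝ) b ×ˢ Icc (0:ℝ) ε', a₀ p.1 p.2 ≠ 0 ∧ a₁ p.1 p.2 ≠ 0 :=
    fun p hp => hnv p.1 hp.1 p.2 hp.2
  have hhc : ContinuousOn h (Icc 0 b ×ˢ Icc 0 ε') := by
    apply ContinuousOn.sub
    · exact ((ha₀c.mono hsub).norm).log (fun p hp => norm_ne_zero_iff.2 (hnv' p hp).1)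
    · exact ((ha₁c.mono hsub).norm).log (fun p hp => norm_ne_zero_iff.2 (hnv' p hp).2)
  have main := riemann_aux b ε' hb hε'mem.1 h hhc hx
  have hint : (∫ t in (0:ℝ)..x, Real.log ‖a₀ t 0 / a₁ t 0‖) = ∫ t in (0:ℝ)..x, h (t, 0) := by
    apply intervalIntegral.integral_congr
    intro t ht
    rw [uIcc_of_le hx.1.le] at ht
    have htb : t ∈ Icc (0:ℝ) b := ⟨ht.1, ht.2.trans hx.2⟩
    simp only [hhdef, norm_div]
    rw [Real.log_div (norm_ne_zero_iff.2 (ha₀ t htb)) (norm_ne_zero_iff.2 (ha₁ t htb))]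
  rw [hint]
  apply main.congr'
  have hev : ∀ᶠ ε in nhdsWithin (0:ℝ) (Ioi 0), ε < ε' :=
    eventually_nhdsWithin_of_eventually_nhds (Filter.Tendsto.eventually_lt_const hε'mem.1 tendsto_id)
  filter_upwards [hev, self_mem_nhdsWithin] with ε hεlt hεpos
  have hεpos' : (0:ℝ) < ε := hεpos
  have hkx : (⌊x / ε⌋₊ : ℝ) * ε ≤ x := by
    have h1 : (⌊x / ε⌋₊ : ℝ) ≤ x / ε := Nat.floor_le (div_nonneg hx.1.le hεpos'.le)
    calc (⌊x / ε⌋₊ : ℝ) * ε ≤ (x / ε) * ε := by nlinarith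
      _ = x := div_mul_cancel₀ _ hεpos'.ne'
  have hmem : ∀ j ∈ Finset.range ⌊x / ε⌋₊,
      (((j:ℝ) * ε, ε) : ℝ × ℝ) ∈ Icc (0:ℝ) b ×ˢ Icc (0:ℝ) ε' := by
    intro j hj
    have hj' : (j:ℝ) < (⌊x / ε⌋₊ : ℝ) := by exact_mod_cast Finset.mem_range.mp hj
    refine ⟨⟨mul_nonneg (Nat.cast_nonneg j) hεpos'.le, ?_⟩, ⟨hεpos'.le, hεlt.le⟩⟩
    show (j:ℝ) * ε ≤ b
    have : (j:ℝ) * ε ≤ (⌊x / ε⌋₊ : ℝ) * ε := by nlinarith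
    linarith [hx.2, hkx]
  have hne0 : ∀ j ∈ Finset.range ⌊x / ε⌋₊, (-(a₀ ((j:ℝ) * ε) ε) / a₁ ((j:ℝ) * ε) ε) ≠ 0 := by
    intro j hj
    obtain ⟨h0, h1⟩ := hnv' _ (hmem j hj)
    exact div_ne_zero (neg_ne_zero.2 h0) h1
  congr 1
  rw [norm_prod, Real.log_prod (fun j hj => norm_ne_zero_iff.2 (hne0 j hj))]
  apply Finset.sum_congr rfl
  intro j hj
  obtain ⟨h0, h1⟩ := hnv' _ (hmem j hj)
  simp only [hhdef]
  rw [norm_div, norm_neg,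
    Real.log_div (norm_ne_zero_iff.2 h0) (norm_ne_zero_iff.2 h1)]
end

section
/- Let d ≥ 1, K ≥ 0, δ > 0, and let λ_1,…,λ_d : [a,b] → ℂ be functions, each Lipschitz with constant K, such that |λ_i(x) − λ_j(x)| ≥ δ for all i ≠ j and all x ∈ [a,b]. For x ∈ [a,b] let M(x) be the d × d Vandermonde matrix with entries M(x)_{ij} = λ_j(x)^{i−1}. Then there exists a constant C ≥ 0, depending only on d, K, δ, and sup_{x,j} |λ_j(x)|, such that for all x, y ∈ [a,b]: ‖M(x)⁻¹ M(y) − I‖ ≤ C |x − y|, and consequently ‖M(x)⁻¹ M(y)‖ ≤ 1 + C |x − y| in operator norm. -/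
open Set Matrix Finset
open scoped Matrix.Norms.L2Operator


theorem norm_stdBasisMatrix_le_aux (d : ℕ) (i j : Fin d) (a : ℂ) :
    ‖Matrix.single i j a‖ ≤ ‖a‖ := by
  have h1 : Matrix.single i j a = a • Matrix.single i j (1:ℂ) := by
    rw [Matrix.smul_single, smul_eq_mul, mul_one]
  have hct : ∀ k l : Fin d, (Matrix.single k l (1:ℂ))ᴴ = Matrix.single l k (1:ℂ) := by
    intro k l
    ext p q
    simp [Matrix.single, Matrix.conjTranspose_apply, and_comm]
  have hsq : ∀ k l : Fin d, (Matrix.single k l (1:ℂ))ᴴ * Matrix.single k l (1:ℂ)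
      = Matrix.single l l (1:ℂ) := by
    intro k l
    rw [hct, Matrix.single_mul_single_same, one_mul]
  have hdiag : ∀ l : Fin d, ‖Matrix.single l l (1:ℂ)‖ = 1 := by
    intro l
    have hne : Matrix.single l l (1:ℂ) ≠ 0 := by
      intro h
      have := congrFun (congrFun h l) l
      simp at this
    have h2 : ‖Matrix.single l l (1:ℂ)‖ * ‖Matrix.single l l (1:ℂ)‖
        = ‖Matrix.single l l (1:ℂ)‖ := by
      rw [← Matrix.l2_opNorm_conjTranspose_mul_self, hsq]
    have h3 : ‖Matrix.single l l (1:ℂ)‖ ≠ 0 := norm_ne_zero_iff.mpr hne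
    field_simp at h2
    exact h2
  have hE : ‖Matrix.single i j (1:ℂ)‖ = 1 := by
    have := Matrix.l2_opNorm_conjTranspose_mul_self (Matrix.single i j (1:ℂ))
    rw [hsq, hdiag] at this
    nlinarith [norm_nonneg (Matrix.single i j (1:ℂ))]
  rw [h1, norm_smul, hE, mul_one]

theorem norm_le_sum_norm_aux (d : ℕ) (A : Matrix (Fin d) (Fin d) ℂ) :
    ‖A‖ ≤ ∑ i : Fin d, ∑ j : Fin d, ‖A i j‖ := by
  conv_lhs => rw [Matrix.matrix_eq_sum_single A]
  refine (norm_sum_le _ _).trans (Finset.sum_le_sum fun i _ => ?_)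
  refine (norm_sum_le _ _).trans (Finset.sum_le_sum fun j _ => ?_)
  exact norm_stdBasisMatrix_le_aux d i j (A i j)


theorem norm_det_le_aux (d : ℕ) (A : Matrix (Fin d) (Fin d) ℂ) (c : ℝ)
    (h : ∀ i j, ‖A i j‖ ≤ c) : ‖A.det‖ ≤ d.factorial * c ^ d := by
  rw [Matrix.det_apply]
  refine (norm_sum_le _ _).trans ?_
  have hterm : ∀ σ : Equiv.Perm (Fin d), ‖Equiv.Perm.sign σ • ∏ i, A (σ i) i‖ ≤ c ^ d := by
    intro σ
    have h1 : ‖Equiv.Perm.sign σ • ∏ i, A (σ i) i‖ = ‖∏ i, A (σ i) i‖ := by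
      rcases Int.units_eq_one_or (Equiv.Perm.sign σ) with h | h <;> simp [h]
    rw [h1, norm_prod]
    calc ∏ i, ‖A (σ i) i‖ ≤ ∏ _i : Fin d, c :=
          Finset.prod_le_prod (fun i _ => norm_nonneg _) (fun i _ => h _ _)
      _ = c ^ d := by simp
  calc ∑ σ : Equiv.Perm (Fin d), ‖Equiv.Perm.sign σ • ∏ i, A (σ i) i‖
      ≤ ∑ _σ : Equiv.Perm (Fin d), c ^ d := Finset.sum_le_sum fun σ _ => hterm σ
    _ = d.factorial * c ^ d := by
        rw [Finset.sum_const, Finset.card_univ, Fintype.card_perm, nsmul_eq_mul, Fintype.card_fin]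

theorem det_vandermonde_lower_aux (d : ℕ) (v : Fin d → ℂ) (δ' : ℝ) (h0 : 0 ≤ δ') (h1 : δ' ≤ 1)
    (hsep : ∀ i j : Fin d, i ≠ j → δ' ≤ ‖v i - v j‖) :
    δ' ^ (d * d) ≤ ‖(Matrix.vandermonde v).det‖ := by
  rw [Matrix.det_vandermonde, norm_prod]
  have hinner : ∀ i : Fin d, δ' ^ (Finset.Ioi i).card ≤ ‖∏ j ∈ Finset.Ioi i, (v j - v i)‖ := by
    intro i
    rw [norm_prod, ← Finset.prod_const]
    refine Finset.prod_le_prod (fun j _ => h0) (fun j hj => hsep j i ?_)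
    rintro rfl; simp at hj
  have hsum : δ' ^ (∑ i : Fin d, (Finset.Ioi i).card) ≤ ∏ i : Fin d, ‖∏ j ∈ Finset.Ioi i, (v j - v i)‖ := by
    rw [← Finset.prod_pow_eq_pow_sum]
    exact Finset.prod_le_prod (fun i _ => pow_nonneg h0 _) (fun i _ => hinner i)
  refine le_trans ?_ hsum
  apply pow_le_pow_of_le_one h0 h1
  calc ∑ i : Fin d, (Finset.Ioi i).card ≤ ∑ _i : Fin d, d :=
        Finset.sum_le_sum fun i _ => by
          simpa using (Finset.card_le_univ (Finset.Ioi i)).trans_eq (by simp)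
    _ = d * d := by simp [Finset.sum_const, Finset.card_univ, mul_comm]

theorem norm_pow_sub_pow_le_aux (x y : ℂ) (n : ℕ) (E : ℝ) (hE : 1 ≤ E)
    (hx : ‖x‖ ≤ E) (hy : ‖y‖ ≤ E) : ‖x ^ n - y ^ n‖ ≤ n * E ^ (2 * n) * ‖x - y‖ := by
  have h0 : (0:ℝ) ≤ E := le_trans zero_le_one hE
  rw [← geom_sum₂_mul]
  rw [norm_mul]
  gcongr
  refine (norm_sum_le _ _).trans ?_
  calc ∑ i ∈ Finset.range n, ‖x ^ i * y ^ (n - 1 - i)‖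
      ≤ ∑ _i ∈ Finset.range n, E ^ (2 * n) := by
        refine Finset.sum_le_sum fun i hi => ?_
        rw [norm_mul, norm_pow, norm_pow, two_mul, pow_add]
        have hxi : ‖x‖ ^ i ≤ E ^ n := le_trans (pow_le_pow_left₀ (norm_nonneg _) hx i)
          (pow_le_pow_right₀ hE (le_of_lt (Finset.mem_range.mp hi)))
        have hyi : ‖y‖ ^ (n - 1 - i) ≤ E ^ n := le_trans (pow_le_pow_left₀ (norm_nonneg _) hy _)
          (pow_le_pow_right₀ hE (by omega))
        exact mul_le_mul hxi hyi (pow_nonneg (norm_nonneg _) _) (pow_nonneg h0 _)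
    _ = n * E ^ (2 * n) := by simp [mul_comm]

/-- Transition-matrix estimate for Vandermonde matrices of slowly varying eigenvalues:
if the `λ_j` are `K`-Lipschitz on `[a,b]`, pairwise `δ`-separated and bounded by `B`, then
there is a constant `C` depending only on `d`, `K`, `δ`, `B` with
`‖M(x)⁻¹M(y) − I‖ ≤ C|x−y|` and `‖M(x)⁻¹M(y)‖ ≤ 1 + C|x−y|` in operator norm. -/
theorem stmt_9 (d : ℕ) (hd : 1 ≤ d) (K δ B : ℝ) (hK : 0 ≤ K) (hδ : 0 < δ) (hB : 0 ≤ B) :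
    ∃ C : ℝ, 0 ≤ C ∧
      ∀ (a b : ℝ) (lam : Fin d → ℝ → ℂ),
        (∀ j : Fin d, LipschitzOnWith (Real.toNNReal K) (lam j) (Icc a b)) →
        (∀ i j : Fin d, i ≠ j → ∀ x ∈ Icc a b, δ ≤ ‖lam i x - lam j x‖) →
        (∀ j : Fin d, ∀ x ∈ Icc a b, ‖lam j x‖ ≤ B) →
        ∀ M : ℝ → Matrix (Fin d) (Fin d) ℂ,
          (∀ x ∈ Icc a b, ∀ i j : Fin d, M x i j = lam j x ^ (i : ℕ)) →
          ∀ x ∈ Icc a b, ∀ y ∈ Icc a b,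
            ‖(M x)⁻¹ * M y - 1‖ ≤ C * |x - y| ∧
            ‖(M x)⁻¹ * M y‖ ≤ 1 + C * |x - y| := by
  set E : ℝ := max 1 B with hEdef
  have hE1 : 1 ≤ E := le_max_left _ _
  have hE0 : 0 ≤ E := zero_le_one.trans hE1
  have hBE : B ≤ E := le_max_right _ _
  set δ' : ℝ := min δ 1 with hδ'def
  have hδ'0 : 0 < δ' := lt_min hδ zero_lt_one
  have hδ'1 : δ' ≤ 1 := min_le_right _ _
  have hδ'δ : δ' ≤ δ := min_le_left _ _
  set Cinv : ℝ := (δ' ^ (d * d))⁻¹ * (d * d * (d.factorial * (E ^ d) ^ d)) with hCinvdef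
  set CL : ℝ := d * d * (d * E ^ (2 * d) * K) with hCLdef
  refine ⟨Cinv * CL, ?_, ?_⟩
  · have h1 : (0:ℝ) ≤ Cinv := by positivity
    have h2 : (0:ℝ) ≤ CL := by positivity
    positivity
  intro a b lam hLip hsep hbound M hM x hx y hy
  -- entry bounds
  have hMentry : ∀ z ∈ Icc a b, ∀ i j : Fin d, ‖M z i j‖ ≤ E ^ d := by
    intro z hz i j
    rw [hM z hz i j, norm_pow]
    calc ‖lam j z‖ ^ (i:ℕ) ≤ E ^ (i:ℕ) :=
          pow_le_pow_left₀ (norm_nonneg _) ((hbound j z hz).trans hBE) _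
      _ ≤ E ^ d := pow_le_pow_right₀ hE1 (le_of_lt i.isLt)
  -- determinant lower bound
  have hdetlow : δ' ^ (d * d) ≤ ‖(M x).det‖ := by
    have hMx : M x = (Matrix.vandermonde (fun j => lam j x))ᵀ := by
      ext i j
      rw [Matrix.transpose_apply, Matrix.vandermonde_apply, hM x hx i j]
    rw [hMx, Matrix.det_transpose]
    exact det_vandermonde_lower_aux d _ δ' hδ'0.le hδ'1 fun i j hij =>
      hδ'δ.trans (hsep i j hij x hx)
  have hdetpos : 0 < ‖(M x).det‖ := lt_of_lt_of_le (pow_pos hδ'0 _) hdetlow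
  have hdetne : (M x).det ≠ 0 := fun h => by simp [h] at hdetpos
  -- adjugate bound
  have hadj : ‖(M x).adjugate‖ ≤ d * d * (d.factorial * (E ^ d) ^ d) := by
    refine (norm_le_sum_norm_aux d _).trans ?_
    have hij : ∀ i j : Fin d, ‖(M x).adjugate i j‖ ≤ d.factorial * (E ^ d) ^ d := by
      intro i j
      rw [Matrix.adjugate_apply]
      refine norm_det_le_aux d _ _ fun p q => ?_
      rw [Matrix.updateRow_apply]
      by_cases hpj : p = j
      · simp only [hpj, if_pos rfl]
        have : ‖(Pi.single i 1 : Fin d → ℂ) q‖ ≤ 1 := by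
          rcases eq_or_ne q i with rfl | hqi
          · simp
          · simp [Pi.single_eq_of_ne hqi]
        exact this.trans (one_le_pow₀ hE1)
      · simp only [if_neg hpj]
        exact hMentry x hx p q
    calc ∑ i : Fin d, ∑ j : Fin d, ‖(M x).adjugate i j‖
        ≤ ∑ _i : Fin d, ∑ _j : Fin d, ((d.factorial : ℝ) * (E ^ d) ^ d) :=
          Finset.sum_le_sum fun i _ => Finset.sum_le_sum fun j _ => hij i j
      _ = d * d * (d.factorial * (E ^ d) ^ d) := by
          simp [Finset.sum_const, Finset.card_univ]; ring
  -- inverse bound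
  have hinv : ‖(M x)⁻¹‖ ≤ Cinv := by
    rw [Matrix.inv_def, norm_smul, Ring.inverse_eq_inv', norm_inv]
    have h1 : ‖(M x).det‖⁻¹ ≤ (δ' ^ (d * d))⁻¹ :=
      inv_anti₀ (pow_pos hδ'0 _) hdetlow
    exact mul_le_mul h1 hadj (norm_nonneg _) (by positivity)
  -- Lipschitz difference bound
  have hdiff : ‖M y - M x‖ ≤ CL * |x - y| := by
    refine (norm_le_sum_norm_aux d _).trans ?_
    have hij : ∀ i j : Fin d, ‖(M y - M x) i j‖ ≤ d * E ^ (2 * d) * K * |x - y| := by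
      intro i j
      rw [Matrix.sub_apply, hM y hy i j, hM x hx i j]
      have hlx : ‖lam j x‖ ≤ E := (hbound j x hx).trans hBE
      have hly : ‖lam j y‖ ≤ E := (hbound j y hy).trans hBE
      have hstep := norm_pow_sub_pow_le_aux (lam j y) (lam j x) (i:ℕ) E hE1 hly hlx
      have hlip : ‖lam j y - lam j x‖ ≤ K * |x - y| := by
        have := (hLip j).dist_le_mul y hy x hx
        rw [Complex.dist_eq, Real.dist_eq] at this
        calc ‖lam j y - lam j x‖ ≤ (K.toNNReal : ℝ) * |y - x| := this
          _ = K * |x - y| := by rw [Real.coe_toNNReal K hK, abs_sub_comm]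
      calc ‖lam j y ^ (i:ℕ) - lam j x ^ (i:ℕ)‖
          ≤ (i:ℕ) * E ^ (2 * (i:ℕ)) * ‖lam j y - lam j x‖ := hstep
        _ ≤ d * E ^ (2 * d) * (K * |x - y|) := by
            have h1 : ((i:ℕ):ℝ) ≤ d := by exact_mod_cast (le_of_lt i.isLt)
            have h2 : E ^ (2 * (i:ℕ)) ≤ E ^ (2 * d) :=
              pow_le_pow_right₀ hE1 (by omega)
            exact mul_le_mul (mul_le_mul h1 h2 (by positivity) (by positivity))
              hlip (norm_nonneg _) (by positivity)
        _ = d * E ^ (2 * d) * K * |x - y| := by ring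
    calc ∑ i : Fin d, ∑ j : Fin d, ‖(M y - M x) i j‖
        ≤ ∑ _i : Fin d, ∑ _j : Fin d, (d * E ^ (2 * d) * K * |x - y|) :=
          Finset.sum_le_sum fun i _ => Finset.sum_le_sum fun j _ => hij i j
      _ = CL * |x - y| := by
          simp [Finset.sum_const, Finset.card_univ, hCLdef]; ring
  -- key identity
  have hkey : (M x)⁻¹ * M y - 1 = (M x)⁻¹ * (M y - M x) := by
    rw [mul_sub, Matrix.nonsing_inv_mul _ (isUnit_iff_ne_zero.mpr hdetne)]
  have hfirst : ‖(M x)⁻¹ * M y - 1‖ ≤ Cinv * CL * |x - y| := by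
    rw [hkey]
    calc ‖(M x)⁻¹ * (M y - M x)‖ ≤ ‖(M x)⁻¹‖ * ‖M y - M x‖ := Matrix.l2_opNorm_mul _ _
      _ ≤ Cinv * (CL * |x - y|) :=
          mul_le_mul hinv hdiff (norm_nonneg _) ((norm_nonneg _).trans hinv)
      _ = Cinv * CL * |x - y| := by ring
  refine ⟨hfirst, ?_⟩
  have hone : ‖(1 : Matrix (Fin d) (Fin d) ℂ)‖ ≤ 1 := by
    have h := Matrix.l2_opNorm_conjTranspose_mul_self (1 : Matrix (Fin d) (Fin d) ℂ)
    rw [Matrix.conjTranspose_one, one_mul] at h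
    nlinarith [norm_nonneg (1 : Matrix (Fin d) (Fin d) ℂ)]
  calc ‖(M x)⁻¹ * M y‖ = ‖1 + ((M x)⁻¹ * M y - 1)‖ := by congr 1; abel
    _ ≤ ‖(1 : Matrix (Fin d) (Fin d) ℂ)‖ + ‖(M x)⁻¹ * M y - 1‖ := norm_add_le _ _
    _ ≤ 1 + Cinv * CL * |x - y| := add_le_add hone hfirst
end

section
/- Let d ≥ 1, ε > 0, C, C' ≥ 0, K₁, K₂ ≥ 0, L ≥ 0, and let m ≤ n be integers with (n − m)ε ≤ L. Suppose for each k = m,…,n we are given d × d complex matrices A(k) = M(k) D(k) M(k)⁻¹ with M(k) invertible, such that ‖D(k)‖ ≤ 1 + Cε for all k, ‖M(k)⁻¹ M(k−1)‖ ≤ 1 + C'ε for m < k ≤ n, ‖M(n)‖ ≤ K₁, and ‖M(m)⁻¹‖ ≤ K₂ (operator norms). Then ‖A(n) A(n−1) ⋯ A(m)‖ ≤ K₁ K₂ (1 + Cε)^{n−m+1} (1 + C'ε)^{n−m} ≤ K₁ K₂ (1 + Cε) e^{(C + C')L}. -/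
open scoped Matrix.Norms.L2Operator

/-- Norm bound for long products of slowly varying transfer matrices
`A(k) = M(k)D(k)M(k)⁻¹`: if `‖D(k)‖ ≤ 1 + Cε`, `‖M(k)⁻¹M(k−1)‖ ≤ 1 + C'ε`,
`‖M(n)‖ ≤ K₁`, `‖M(m)⁻¹‖ ≤ K₂` and `(n−m)ε ≤ L`, then
`‖A(n)⋯A(m)‖ ≤ K₁K₂(1+Cε)^{n−m+1}(1+C'ε)^{n−m} ≤ K₁K₂(1+Cε)e^{(C+C')L}`. -/
theorem stmt_10 (d : ℕ) (hd : 1 ≤ d) (ε : ℝ) (hε : 0 < ε) (C C' K₁ K₂ L : ℝ)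
    (hC : 0 ≤ C) (hC' : 0 ≤ C') (hK₁ : 0 ≤ K₁) (hK₂ : 0 ≤ K₂) (hL : 0 ≤ L)
    (m n : ℕ) (hmn : m ≤ n) (hLen : ((n : ℝ) - m) * ε ≤ L)
    (A M D : ℕ → Matrix (Fin d) (Fin d) ℂ)
    (hMunit : ∀ k : ℕ, m ≤ k → k ≤ n → IsUnit (M k))
    (hA : ∀ k : ℕ, m ≤ k → k ≤ n → A k = M k * D k * (M k)⁻¹)
    (hD : ∀ k : ℕ, m ≤ k → k ≤ n → ‖D k‖ ≤ 1 + C * ε)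
    (hMM : ∀ k : ℕ, m < k → k ≤ n → ‖(M k)⁻¹ * M (k - 1)‖ ≤ 1 + C' * ε)
    (hMn : ‖M n‖ ≤ K₁) (hMm : ‖(M m)⁻¹‖ ≤ K₂) :
    ‖((List.range (n - m + 1)).map (fun i => A (n - i))).prod‖ ≤
        K₁ * K₂ * (1 + C * ε) ^ (n - m + 1) * (1 + C' * ε) ^ (n - m) ∧
      K₁ * K₂ * (1 + C * ε) ^ (n - m + 1) * (1 + C' * ε) ^ (n - m) ≤
        K₁ * K₂ * (1 + C * ε) * Real.exp ((C + C') * L) := by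
  have hCe : (0:ℝ) ≤ 1 + C * ε := by positivity
  have hC'e : (0:ℝ) ≤ 1 + C' * ε := by positivity
  have hdet : ∀ k : ℕ, m ≤ k → k ≤ n → IsUnit (M k).det := fun k h1 h2 =>
    (Matrix.isUnit_iff_isUnit_det _).mp (hMunit k h1 h2)
  -- key inductive bound
  have key : ∀ j : ℕ, j ≤ n - m →
      ‖((List.range (j + 1)).map (fun i => A (n - i))).prod * M (n - j)‖ ≤
        K₁ * (1 + C * ε) ^ (j + 1) * (1 + C' * ε) ^ j := by
    intro j
    induction j with
    | zero =>
      intro _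
      simp only [zero_add, List.range_succ, List.range_zero, List.nil_append, List.map_cons,
        List.map_nil, List.prod_cons, List.prod_nil, mul_one, Nat.sub_zero, pow_one, pow_zero]
      rw [hA n hmn le_rfl, Matrix.mul_assoc, Matrix.mul_assoc,
        Matrix.nonsing_inv_mul _ (hdet n hmn le_rfl), mul_one]
      calc ‖M n * D n‖ ≤ ‖M n‖ * ‖D n‖ := norm_mul_le _ _
        _ ≤ K₁ * (1 + C * ε) := mul_le_mul hMn (hD n hmn le_rfl) (norm_nonneg _) hK₁
    | succ j ih =>
      intro hj
      have hj' : j ≤ n - m := Nat.le_of_succ_le hj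
      have h1 : m ≤ n - (j + 1) := by omega
      have h2 : n - (j + 1) ≤ n := by omega
      have h3 : m < n - j := by omega
      have h4 : n - j ≤ n := by omega
      have h5 : n - j - 1 = n - (j + 1) := by omega
      have hmm' : ‖(M (n - j))⁻¹ * M (n - (j + 1))‖ ≤ 1 + C' * ε := by
        have := hMM (n - j) h3 h4
        rwa [h5] at this
      set P := ((List.range (j + 1)).map (fun i => A (n - i))).prod with hP
      have hsplit : ((List.range (j + 2)).map (fun i => A (n - i))).prod
          = P * A (n - (j + 1)) := by
        rw [show j + 2 = (j + 1) + 1 from rfl, List.range_succ, List.map_append,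
          List.prod_append, List.map_cons, List.map_nil, List.prod_cons, List.prod_nil, mul_one]
      have hkey : P * A (n - (j + 1)) * M (n - (j + 1)) =
          (P * M (n - j)) * ((M (n - j))⁻¹ * M (n - (j + 1))) * D (n - (j + 1)) := by
        rw [hA _ h1 h2]
        have e1 : M (n - (j+1)) * D (n - (j+1)) * (M (n - (j+1)))⁻¹ * M (n - (j+1))
            = M (n - (j+1)) * D (n - (j+1)) := by
          rw [Matrix.mul_assoc, Matrix.nonsing_inv_mul _ (hdet _ h1 h2), mul_one]
        calc P * (M (n - (j+1)) * D (n - (j+1)) * (M (n - (j+1)))⁻¹) * M (n - (j+1))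
            = P * (M (n - (j+1)) * D (n - (j+1)) * (M (n - (j+1)))⁻¹ * M (n - (j+1))) := by
              rw [mul_assoc]
          _ = P * (M (n - (j+1)) * D (n - (j+1))) := by rw [e1]
          _ = (P * M (n - j)) * ((M (n - j))⁻¹ * M (n - (j + 1))) * D (n - (j + 1)) := by
              rw [mul_assoc (P * M (n - j)), mul_assoc P (M (n - j)),
                mul_assoc ((M (n - j))⁻¹),
                ← mul_assoc (M (n - j)) ((M (n - j))⁻¹),
                Matrix.mul_nonsing_inv _ (hdet _ (le_of_lt h3) h4), one_mul]
      rw [hsplit, ← mul_one (P * A (n - (j + 1)))]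
      nth_rewrite 1 [← Matrix.mul_nonsing_inv _ (hdet _ h1 h2)]
      rw [← mul_assoc, hkey]
      have step1 : ‖(P * M (n - j)) * ((M (n - j))⁻¹ * M (n - (j + 1))) * D (n - (j + 1))
          * (M (n - (j + 1)))⁻¹‖
          ≤ ‖(P * M (n - j)) * ((M (n - j))⁻¹ * M (n - (j + 1))) * D (n - (j + 1))‖
            * ‖(M (n - (j + 1)))⁻¹‖ := norm_mul_le _ _
      calc ‖(P * M (n - j)) * ((M (n - j))⁻¹ * M (n - (j + 1))) * D (n - (j + 1))
            * (M (n - (j + 1)))⁻¹ * M (n - (j + 1))‖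
          = ‖(P * M (n - j)) * ((M (n - j))⁻¹ * M (n - (j + 1))) * D (n - (j + 1))‖ := by
            rw [mul_assoc _ _ (M (n - (j+1))), Matrix.nonsing_inv_mul _ (hdet _ h1 h2), mul_one]
        _ ≤ ‖(P * M (n - j)) * ((M (n - j))⁻¹ * M (n - (j + 1)))‖ * ‖D (n - (j + 1))‖ :=
            norm_mul_le _ _
        _ ≤ ‖P * M (n - j)‖ * ‖(M (n - j))⁻¹ * M (n - (j + 1))‖ * ‖D (n - (j + 1))‖ :=
            mul_le_mul_of_nonneg_right (norm_mul_le _ _) (norm_nonneg _)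
        _ ≤ (K₁ * (1 + C * ε) ^ (j + 1) * (1 + C' * ε) ^ j) * (1 + C' * ε) * (1 + C * ε) :=
            mul_le_mul (mul_le_mul (ih hj') hmm' (norm_nonneg _) (by positivity))
              (hD _ h1 h2) (norm_nonneg _) (by positivity)
        _ = K₁ * (1 + C * ε) ^ (j + 1 + 1) * (1 + C' * ε) ^ (j + 1) := by ring
  -- conclude first inequality
  have hnm : n - (n - m) = m := by omega
  have hmain := key (n - m) le_rfl
  rw [hnm] at hmain
  constructor
  · set P := ((List.range (n - m + 1)).map (fun i => A (n - i))).prod with hP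
    have : P = P * M m * (M m)⁻¹ := by
      rw [mul_assoc, Matrix.mul_nonsing_inv _ (hdet m le_rfl hmn), mul_one]
    calc ‖P‖ = ‖P * M m * (M m)⁻¹‖ := by rw [← this]
      _ ≤ ‖P * M m‖ * ‖(M m)⁻¹‖ := norm_mul_le _ _
      _ ≤ (K₁ * (1 + C * ε) ^ (n - m + 1) * (1 + C' * ε) ^ (n - m)) * K₂ :=
          mul_le_mul hmain hMm (norm_nonneg _) (by positivity)
      _ = K₁ * K₂ * (1 + C * ε) ^ (n - m + 1) * (1 + C' * ε) ^ (n - m) := by ring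
  · -- second inequality
    have hcast : ((n - m : ℕ) : ℝ) = (n : ℝ) - m := by
      rw [Nat.cast_sub hmn]
    have hNL : ((n - m : ℕ) : ℝ) * ε ≤ L := by rw [hcast]; exact hLen
    have hexp : ∀ c : ℝ, 0 ≤ c → (1 + c * ε) ^ (n - m) ≤ Real.exp (c * L) := by
      intro c hc
      calc (1 + c * ε) ^ (n - m) ≤ (Real.exp (c * ε)) ^ (n - m) := by
            apply pow_le_pow_left₀ (by positivity)
            linarith [Real.add_one_le_exp (c * ε)]
        _ = Real.exp ((n - m : ℕ) * (c * ε)) := by rw [← Real.exp_nat_mul]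
        _ ≤ Real.exp (c * L) := by
            apply Real.exp_le_exp.mpr
            have : ((n - m : ℕ) : ℝ) * (c * ε) = c * (((n - m : ℕ) : ℝ) * ε) := by ring
            rw [this]
            exact mul_le_mul_of_nonneg_left hNL hc
    calc K₁ * K₂ * (1 + C * ε) ^ (n - m + 1) * (1 + C' * ε) ^ (n - m)
        = (K₁ * K₂ * (1 + C * ε)) * ((1 + C * ε) ^ (n - m) * (1 + C' * ε) ^ (n - m)) := by
          rw [pow_succ]; ring
      _ ≤ (K₁ * K₂ * (1 + C * ε)) * (Real.exp (C * L) * Real.exp (C' * L)) := by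
          gcongr <;> [exact hexp C hC; exact hexp C' hC']
      _ = K₁ * K₂ * (1 + C * ε) * Real.exp ((C + C') * L) := by
          rw [← Real.exp_add]; ring_nf
end
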